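/- Let d ≥ 1 and let v : (0,∞) → [0,∞) be continuous with s ↦ v(s) s^{d/2+3} bounded and ∫₀^1 v(s) ds < ∞. Define q : ℝ^d × (0,∞) → [0,∞) by q(x,t) = √(w(t)) e^{−|x|²/(2t²)}, where w(t) = (1/(2π^{d/2})) t^{−d−3} v(1/(4t²)). Then for every x ∈ ℝ^d, ∫₀^∞ ∫_{ℝ^d} q(y,t) q(y−x,t) dy dt = ∫₀^∞ e^{−s|x|²} v(s) ds. -/

import Mathlib

open MeasureTheory

/-- The weight `w(t) = (1/(2 π^{d/2})) t^{-d-3} v(1/(4t²))`. -/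
noncomputable def wfun (d : ℕ) (v : ℝ → ℝ) (t : ℝ) : ℝ :=
  (1 / (2 * Real.pi ^ ((d : ℝ) / 2))) * t ^ (-(d : ℝ) - 3) * v (1 / (4 * t ^ 2))

/-- The kernel `q(x,t) = √(w(t)) e^{-|x|²/(2t²)}`. -/
noncomputable def qfun (d : ℕ) (v : ℝ → ℝ) (x : EuclideanSpace ℝ (Fin d)) (t : ℝ) : ℝ :=
  Real.sqrt (wfun d v t) * Real.exp (-‖x‖ ^ 2 / (2 * t ^ 2))

lemma aux_gauss (d : ℕ) (t : ℝ) (ht : 0 < t) :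
    ∫ z : EuclideanSpace ℝ (Fin d), Real.exp (-(t ^ 2)⁻¹ * ‖z‖ ^ 2)
      = (Real.pi * t ^ 2) ^ ((d : ℝ) / 2) := by
  rw [GaussianFourier.integral_rexp_neg_mul_sq_norm (by positivity),
    finrank_euclideanSpace_fin]
  congr 1
  field_simp

lemma aux_sq (d : ℕ) (x y : EuclideanSpace ℝ (Fin d)) :
    ‖y‖ ^ 2 + ‖y - x‖ ^ 2 = 2 * ‖y - (2:ℝ)⁻¹ • x‖ ^ 2 + ‖x‖ ^ 2 / 2 := by
  have h1 : ‖y - x‖ ^ 2 = ‖y‖ ^ 2 - 2 * inner ℝ y x + ‖x‖ ^ 2 :=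
    norm_sub_sq_real y x
  have h2 : ‖y - (2:ℝ)⁻¹ • x‖ ^ 2
      = ‖y‖ ^ 2 - 2 * inner ℝ y ((2:ℝ)⁻¹ • x) + ‖(2:ℝ)⁻¹ • x‖ ^ 2 :=
    norm_sub_sq_real y _
  rw [real_inner_smul_right, norm_smul] at h2
  simp only [norm_inv, Real.norm_ofNat] at h2
  rw [h1, h2]; ring

/-- for `v : (0,∞) → [0,∞)` continuous with `v(s) s^{d/2+3}` bounded and
`∫₀^1 v < ∞`, the kernel `q(x,t) = √(w(t)) e^{-|x|²/(2t²)}` satisfies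
`∫₀^∞ ∫_{ℝ^d} q(y,t) q(y-x,t) dy dt = ∫₀^∞ e^{-s|x|²} v(s) ds` for every `x ∈ ℝ^d`. -/
theorem statement17 (d : ℕ) (hd : 1 ≤ d) (v : ℝ → ℝ)
    (hv_cont : ContinuousOn v (Set.Ioi 0))
    (hv_nonneg : ∀ s : ℝ, 0 < s → 0 ≤ v s)
    (hv_bdd : ∃ C : ℝ, ∀ s : ℝ, 0 < s → v s * s ^ ((d : ℝ) / 2 + 3) ≤ C)
    (hv_int : IntegrableOn v (Set.Ioc 0 1)) :
    ∀ x : EuclideanSpace ℝ (Fin d),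
      (∫ t in Set.Ioi (0:ℝ), ∫ y : EuclideanSpace ℝ (Fin d),
          qfun d v y t * qfun d v (y - x) t) =
        ∫ s in Set.Ioi (0:ℝ), Real.exp (-s * ‖x‖ ^ 2) * v s := by
  intro x
  set f : ℝ → ℝ := fun s => Real.exp (-s * ‖x‖ ^ 2) * v s with hf
  set g : ℝ → ℝ := fun u => (4:ℝ)⁻¹ • f ((4:ℝ)⁻¹ * u) with hg
  have hgint : (∫ u in Set.Ioi (0:ℝ), g u) = ∫ s in Set.Ioi (0:ℝ), f s := by
    rw [hg, integral_smul]
    rw [MeasureTheory.integral_comp_mul_left_Ioi f 0 (by norm_num : (0:ℝ) < 4⁻¹)]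
    simp [smul_smul]
  rw [← hgint, ← MeasureTheory.integral_comp_rpow_Ioi g (p := (-2:ℝ)) (by norm_num)]
  apply setIntegral_congr_fun measurableSet_Ioi
  intro t ht
  dsimp only
  have ht' : (0:ℝ) < t := ht
  have hs : (0:ℝ) < 1 / (4 * t ^ 2) := by positivity
  have hw : 0 ≤ wfun d v t := by
    unfold wfun
    have := hv_nonneg _ hs
    have h1 : (0:ℝ) < 1 / (2 * Real.pi ^ ((d : ℝ) / 2)) := by positivity
    have h2 : (0:ℝ) < t ^ (-(d : ℝ) - 3) := Real.rpow_pos_of_pos ht' _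
    positivity
  -- compute inner integral
  have key : (∫ y : EuclideanSpace ℝ (Fin d), qfun d v y t * qfun d v (y - x) t)
      = wfun d v t * ((Real.pi * t ^ 2) ^ ((d : ℝ) / 2)
          * Real.exp (-‖x‖ ^ 2 / (4 * t ^ 2))) := by
    have step : ∀ y : EuclideanSpace ℝ (Fin d),
        qfun d v y t * qfun d v (y - x) t
          = (wfun d v t * Real.exp (-‖x‖ ^ 2 / (4 * t ^ 2)))
            * Real.exp (-(t ^ 2)⁻¹ * ‖y - (2:ℝ)⁻¹ • x‖ ^ 2) := by
      intro y
      unfold qfun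
      rw [show Real.sqrt (wfun d v t) * Real.exp (-‖y‖ ^ 2 / (2 * t ^ 2)) *
            (Real.sqrt (wfun d v t) * Real.exp (-‖y - x‖ ^ 2 / (2 * t ^ 2)))
          = Real.sqrt (wfun d v t) * Real.sqrt (wfun d v t) *
            (Real.exp (-‖y‖ ^ 2 / (2 * t ^ 2)) * Real.exp (-‖y - x‖ ^ 2 / (2 * t ^ 2)))
          by ring]
      rw [Real.mul_self_sqrt hw, ← Real.exp_add]
      have hid := aux_sq d x y
      have ht2 : (t:ℝ) ^ 2 ≠ 0 := by positivity
      rw [mul_assoc, ← Real.exp_add]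
      congr 1
      have h : -‖y‖ ^ 2 / (2 * t ^ 2) + -‖y - x‖ ^ 2 / (2 * t ^ 2)
          = -(‖y‖ ^ 2 + ‖y - x‖ ^ 2) / (2 * t ^ 2) := by ring
      rw [h, hid]
      field_simp
      ring
    simp_rw [step]
    rw [MeasureTheory.integral_const_mul,
      MeasureTheory.integral_sub_right_eq_self
        (fun z : EuclideanSpace ℝ (Fin d) => Real.exp (-(t ^ 2)⁻¹ * ‖z‖ ^ 2)) ((2:ℝ)⁻¹ • x),
      aux_gauss d t ht']
    ring
  rw [key]
  -- now algebra: wfun * (π t²)^{d/2} * exp = (1/2) t^{-3} v(1/(4t²)) exp(...)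
  have hπ : (0:ℝ) < Real.pi ^ ((d : ℝ) / 2) := by positivity
  have hrw : wfun d v t * ((Real.pi * t ^ 2) ^ ((d : ℝ) / 2))
      = (1/2) * t ^ (-3 : ℝ) * v (1 / (4 * t ^ 2)) := by
    unfold wfun
    have e1 : ((t ^ 2 : ℝ)) ^ ((d:ℝ)/2) = t ^ ((d:ℝ)) := by
      rw [← Real.rpow_natCast t 2, ← Real.rpow_mul ht'.le]
      congr 1
      push_cast; ring
    rw [Real.mul_rpow Real.pi_pos.le (by positivity), e1]
    have hcomb : t ^ (-(d:ℝ) - 3) * t ^ ((d:ℝ)) = t ^ (-3:ℝ) := by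
      rw [← Real.rpow_add ht']; congr 1; ring
    calc 1 / (2 * Real.pi ^ ((d:ℝ)/2)) * t ^ (-(d:ℝ) - 3) * v (1 / (4 * t ^ 2))
          * (Real.pi ^ ((d:ℝ)/2) * t ^ ((d:ℝ)))
        = (t ^ (-(d:ℝ) - 3) * t ^ ((d:ℝ))) * v (1 / (4 * t ^ 2))
            * (Real.pi ^ ((d:ℝ)/2) / (2 * Real.pi ^ ((d:ℝ)/2))) := by ring
      _ = t ^ (-3:ℝ) * v (1 / (4 * t ^ 2))
            * (Real.pi ^ ((d:ℝ)/2) / (2 * Real.pi ^ ((d:ℝ)/2))) := by rw [hcomb]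
      _ = 1/2 * t ^ (-3:ℝ) * v (1 / (4 * t ^ 2)) := by
            have hhalf : Real.pi ^ ((d:ℝ)/2) / (2 * Real.pi ^ ((d:ℝ)/2)) = 1/2 := by
              rw [div_eq_iff (by positivity : (2 * Real.pi ^ ((d:ℝ)/2)) ≠ 0)]; ring
            rw [hhalf]; ring
  rw [← mul_assoc, hrw]
  -- RHS: (|-2| * t^(-3)) • g (t^(-2))
  have htp : t ^ ((-2:ℝ)) = (t ^ 2)⁻¹ := by
    rw [show ((-2:ℝ)) = -(2:ℕ) by norm_num, Real.rpow_neg ht'.le, Real.rpow_natCast]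
  rw [hg, hf]
  simp only [smul_eq_mul, htp]
  have h1 : (4:ℝ)⁻¹ * (t ^ 2)⁻¹ = 1 / (4 * t ^ 2) := by field_simp
  rw [h1]
  have h2 : -(1 / (4 * t ^ 2)) * ‖x‖ ^ 2 = -‖x‖ ^ 2 / (4 * t ^ 2) := by ring
  rw [h2]
  have h3 : |(-2:ℝ)| = 2 := by norm_num
  rw [h3]
  have h4 : ((-2:ℝ) - 1) = (-3:ℝ) := by norm_num
  rw [h4]
  ring
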